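/- Consider a streaming least-squares setup satisfying the stability hypotheses with parameters κ, δ, θ, λ, where δ ∈ [0,1) and 0 ≤ θ < (1−δ)/2, and set ε = (1+δ)/2 − √((1−δ)²/4 − θ²). Then for all integers K ≥ k ≥ ℓ ≥ 0, ‖α_{k−ℓ|K+1} − α_{k−ℓ|K}‖₂ ≤ (θ/(1−ε))^ℓ · ‖α_{k|K+1} − α_{k|K}‖₂. -/

import Mathlib

open Matrix

/-- Euclidean (ℓ²) norm of a vector in ℝ^n. -/
noncomputable def vecNorm {n : Type*} [Fintype n] (v : n → ℝ) : ℝ :=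
  Real.sqrt (∑ i, v i ^ 2)

/-- Spectral norm (largest singular value) of a real matrix, defined as the operator
norm: the supremum of `‖A x‖₂` over unit vectors `x`. -/
noncomputable def matSpectralNorm {m n : Type*} [Fintype m] [Fintype n]
    (A : Matrix m n ℝ) : ℝ :=
  sSup ((fun x => vecNorm (A.mulVec x)) '' {x | vecNorm x = 1})

/-- Smallest eigenvalue of a real symmetric matrix, via the Rayleigh quotient. -/
noncomputable def eigMin {n : Type*} [Fintype n] (S : Matrix n n ℝ) : ℝ :=
  sInf ((fun x => x ⬝ᵥ S.mulVec x) '' {x | vecNorm x = 1})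

section Streaming

variable {N : ℕ} {M : ℕ → ℕ}

/-- `D_k = A_kᵀ A_k + B_{k+1}ᵀ B_{k+1} + λ_k I`. -/
noncomputable def Dmat (A B : ∀ k : ℕ, Matrix (Fin (M k)) (Fin N) ℝ) (lam : ℕ → ℝ)
    (k : ℕ) : Matrix (Fin N) (Fin N) ℝ :=
  (A k)ᵀ * A k + (B (k + 1))ᵀ * B (k + 1) + lam k • 1

/-- `E_k = A_{k+1}ᵀ B_{k+1}`. -/
noncomputable def Emat (A B : ∀ k : ℕ, Matrix (Fin (M k)) (Fin N) ℝ) (k : ℕ) :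
    Matrix (Fin N) (Fin N) ℝ :=
  (A (k + 1))ᵀ * B (k + 1)

/-- `D_k' = A_kᵀ A_k + λ_k I`. -/
noncomputable def Dmat' (A : ∀ k : ℕ, Matrix (Fin (M k)) (Fin N) ℝ) (lam : ℕ → ℝ)
    (k : ℕ) : Matrix (Fin N) (Fin N) ℝ :=
  (A k)ᵀ * A k + lam k • 1

/-- `Q₀ = D₀`, `Q_{k+1} = D_{k+1} − E_k U_k` with `U_k = Q_k⁻¹ E_kᵀ`. -/
noncomputable def Qmat (A B : ∀ k : ℕ, Matrix (Fin (M k)) (Fin N) ℝ) (lam : ℕ → ℝ) :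
    ℕ → Matrix (Fin N) (Fin N) ℝ
  | 0 => Dmat A B lam 0
  | k + 1 => Dmat A B lam (k + 1) - Emat A B k * ((Qmat A B lam k)⁻¹ * (Emat A B k)ᵀ)

/-- `U_k = Q_k⁻¹ E_kᵀ`. -/
noncomputable def Umat (A B : ∀ k : ℕ, Matrix (Fin (M k)) (Fin N) ℝ) (lam : ℕ → ℝ)
    (k : ℕ) : Matrix (Fin N) (Fin N) ℝ :=
  (Qmat A B lam k)⁻¹ * (Emat A B k)ᵀ

/-- `Q₀' = D₀'`, `Q_k' = D_k' − E_{k−1} U_{k−1}` for `k ≥ 1`. -/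
noncomputable def Qmat' (A B : ∀ k : ℕ, Matrix (Fin (M k)) (Fin N) ℝ) (lam : ℕ → ℝ) :
    ℕ → Matrix (Fin N) (Fin N) ℝ
  | 0 => Dmat' A lam 0
  | k + 1 => Dmat' A lam (k + 1) - Emat A B k * Umat A B lam k

/-- `w_k = A_kᵀ y_k + B_{k+1}ᵀ y_{k+1}`. -/
noncomputable def wvec (A B : ∀ k : ℕ, Matrix (Fin (M k)) (Fin N) ℝ)
    (y : ∀ k : ℕ, Fin (M k) → ℝ) (k : ℕ) : Fin N → ℝ :=
  (A k)ᵀ.mulVec (y k) + (B (k + 1))ᵀ.mulVec (y (k + 1))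

/-- `w_k' = A_kᵀ y_k`. -/
noncomputable def wvec' (A : ∀ k : ℕ, Matrix (Fin (M k)) (Fin N) ℝ)
    (y : ∀ k : ℕ, Fin (M k) → ℝ) (k : ℕ) : Fin N → ℝ :=
  (A k)ᵀ.mulVec (y k)

/-- `v₀ = Q₀⁻¹ w₀`, `v_k = Q_k⁻¹ (w_k − E_{k−1} v_{k−1})` for `k ≥ 1`. -/
noncomputable def vvec (A B : ∀ k : ℕ, Matrix (Fin (M k)) (Fin N) ℝ) (lam : ℕ → ℝ)
    (y : ∀ k : ℕ, Fin (M k) → ℝ) : ℕ → Fin N → ℝ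
  | 0 => (Qmat A B lam 0)⁻¹.mulVec (wvec A B y 0)
  | k + 1 => (Qmat A B lam (k + 1))⁻¹.mulVec
      (wvec A B y (k + 1) - (Emat A B k).mulVec (vvec A B lam y k))

/-- `v₀' = Q₀'⁻¹ w₀'`, `v_K' = Q_K'⁻¹ (w_K' − E_{K−1} v_{K−1})` for `K ≥ 1`. -/
noncomputable def vvec' (A B : ∀ k : ℕ, Matrix (Fin (M k)) (Fin N) ℝ) (lam : ℕ → ℝ)
    (y : ∀ k : ℕ, Fin (M k) → ℝ) : ℕ → Fin N → ℝ
  | 0 => (Qmat' A B lam 0)⁻¹.mulVec (wvec' A y 0)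
  | K + 1 => (Qmat' A B lam (K + 1))⁻¹.mulVec
      (wvec' A y (K + 1) - (Emat A B K).mulVec (vvec A B lam y K))

/-- Backward recursion producing the streaming least-squares estimates, indexed by the
lag `l = K − k`: `alphaAux K 0 = v_K'` and `alphaAux K (l+1) = v_{K−l−1} − U_{K−l−1} ·
alphaAux K l`. -/
noncomputable def alphaAux (A B : ∀ k : ℕ, Matrix (Fin (M k)) (Fin N) ℝ) (lam : ℕ → ℝ)
    (y : ∀ k : ℕ, Fin (M k) → ℝ) (K : ℕ) : ℕ → Fin N → ℝ
  | 0 => vvec' A B lam y K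
  | l + 1 => vvec A B lam y (K - (l + 1)) -
      (Umat A B lam (K - (l + 1))).mulVec (alphaAux A B lam y K l)

/-- The streaming least-squares estimate `α_{k|K}` (for `0 ≤ k ≤ K`): it satisfies
`α_{K|K} = v_K'` and `α_{k|K} = v_k − U_k α_{k+1|K}` for `k < K`. -/
noncomputable def alphaEst (A B : ∀ k : ℕ, Matrix (Fin (M k)) (Fin N) ℝ) (lam : ℕ → ℝ)
    (y : ∀ k : ℕ, Fin (M k) → ℝ) (k K : ℕ) : Fin N → ℝ :=
  alphaAux A B lam y K (K - k)

end Streaming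

section Helpers

open Matrix

lemma vecNorm_eq_norm {n : Type*} [Fintype n] (v : n → ℝ) :
    vecNorm v = ‖(WithLp.equiv 2 (n → ℝ)).symm v‖ := by
  rw [EuclideanSpace.norm_eq]
  simp [vecNorm, sq_abs]

lemma vecNorm_nonneg {n : Type*} [Fintype n] (v : n → ℝ) : 0 ≤ vecNorm v :=
  Real.sqrt_nonneg _

lemma vecNorm_zero {n : Type*} [Fintype n] : vecNorm (0 : n → ℝ) = 0 := by
  simp [vecNorm]

lemma vecNorm_eq_zero {n : Type*} [Fintype n] {v : n → ℝ} (h : vecNorm v = 0) : v = 0 := by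
  rw [vecNorm_eq_norm] at h
  have := norm_eq_zero.mp h
  simpa using congrArg (WithLp.equiv 2 (n → ℝ)) this

lemma vecNorm_smul {n : Type*} [Fintype n] (c : ℝ) (v : n → ℝ) :
    vecNorm (c • v) = |c| * vecNorm v := by
  rw [vecNorm_eq_norm, vecNorm_eq_norm]
  have : (WithLp.equiv 2 (n → ℝ)).symm (c • v) = c • (WithLp.equiv 2 (n → ℝ)).symm v := rfl
  rw [this, norm_smul, Real.norm_eq_abs]

lemma vecNorm_neg {n : Type*} [Fintype n] (v : n → ℝ) : vecNorm (-v) = vecNorm v := by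
  simpa using vecNorm_smul (-1) v

lemma dotProduct_self_eq {n : Type*} [Fintype n] (v : n → ℝ) :
    v ⬝ᵥ v = vecNorm v ^ 2 := by
  rw [vecNorm, Real.sq_sqrt (by positivity)]
  simp [dotProduct, sq]

lemma abs_dotProduct_le {n : Type*} [Fintype n] (v w : n → ℝ) :
    |v ⬝ᵥ w| ≤ vecNorm v * vecNorm w := by
  rw [vecNorm_eq_norm, vecNorm_eq_norm]
  have h := abs_real_inner_le_norm ((WithLp.equiv 2 (n → ℝ)).symm v)
    ((WithLp.equiv 2 (n → ℝ)).symm w)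
  rw [PiLp.inner_apply] at h
  simpa [dotProduct, RCLike.inner_apply, mul_comm] using h

section op
variable {m n : Type*} [Fintype m] [Fintype n] [DecidableEq n]

lemma vecNorm_mulVec_le_clm (A : Matrix m n ℝ) (x : n → ℝ) :
    vecNorm (A.mulVec x) ≤
      ‖(LinearMap.toContinuousLinearMap (Matrix.toEuclideanLin A))‖ * vecNorm x := by
  have h := (LinearMap.toContinuousLinearMap (Matrix.toEuclideanLin A)).le_opNorm
      ((WithLp.equiv 2 (n → ℝ)).symm x)
  have he : (LinearMap.toContinuousLinearMap (Matrix.toEuclideanLin A))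
      ((WithLp.equiv 2 (n → ℝ)).symm x) = (WithLp.equiv 2 (m → ℝ)).symm (A.mulVec x) := by
    simp [Matrix.toEuclideanLin, LinearMap.toContinuousLinearMap]
  rw [vecNorm_eq_norm, vecNorm_eq_norm, ← he]
  exact h

lemma spectral_bound {A : Matrix m n ℝ} {c : ℝ} (h : matSpectralNorm A ≤ c) (x : n → ℝ) :
    vecNorm (A.mulVec x) ≤ c * vecNorm x := by
  by_cases hx : vecNorm x = 0
  · have : x = 0 := vecNorm_eq_zero hx
    subst this
    rw [Matrix.mulVec_zero, hx, mul_zero]; exact le_of_eq vecNorm_zero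
  · have hx0 : 0 < vecNorm x := lt_of_le_of_ne (vecNorm_nonneg x) (Ne.symm hx)
    set u : n → ℝ := (vecNorm x)⁻¹ • x with hu
    have hun : vecNorm u = 1 := by
      rw [hu, vecNorm_smul, abs_of_pos (inv_pos.mpr hx0), inv_mul_cancel₀ (ne_of_gt hx0)]
    have hbdd : BddAbove ((fun z => vecNorm (A.mulVec z)) '' {z | vecNorm z = 1}) := by
      refine ⟨‖(LinearMap.toContinuousLinearMap (Matrix.toEuclideanLin A))‖, ?_⟩
      rintro s ⟨z, hz, rfl⟩
      calc vecNorm (A.mulVec z) ≤ _ * vecNorm z := vecNorm_mulVec_le_clm A z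
        _ = _ := by rw [hz, mul_one]
    have h1 : vecNorm (A.mulVec u) ≤ c := le_trans (le_csSup hbdd ⟨u, hun, rfl⟩) h
    have h2 : A.mulVec x = vecNorm x • A.mulVec u := by
      rw [hu, Matrix.mulVec_smul, smul_smul, mul_inv_cancel₀ (ne_of_gt hx0), one_smul]
    rw [h2, vecNorm_smul, abs_of_pos hx0, mul_comm]
    exact mul_le_mul_of_nonneg_right h1 (le_of_lt hx0)

lemma eigMin_bound {S : Matrix n n ℝ} {c : ℝ} (h : c ≤ eigMin S) (x : n → ℝ) :
    c * vecNorm x ^ 2 ≤ x ⬝ᵥ S.mulVec x := by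
  by_cases hx : vecNorm x = 0
  · have : x = 0 := vecNorm_eq_zero hx
    subst this
    simp [hx]
  · have hx0 : 0 < vecNorm x := lt_of_le_of_ne (vecNorm_nonneg x) (Ne.symm hx)
    set u : n → ℝ := (vecNorm x)⁻¹ • x with hu
    have hun : vecNorm u = 1 := by
      rw [hu, vecNorm_smul, abs_of_pos (inv_pos.mpr hx0), inv_mul_cancel₀ (ne_of_gt hx0)]
    have hbdd : BddBelow ((fun z => z ⬝ᵥ S.mulVec z) '' {z | vecNorm z = 1}) := by
      refine ⟨-‖(LinearMap.toContinuousLinearMap (Matrix.toEuclideanLin S))‖, ?_⟩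
      rintro s ⟨z, hz, rfl⟩
      have h1 : |z ⬝ᵥ S.mulVec z| ≤ vecNorm z * vecNorm (S.mulVec z) := abs_dotProduct_le _ _
      have h2 := vecNorm_mulVec_le_clm S z
      rw [hz, mul_one] at h2
      rw [hz, one_mul] at h1
      have := neg_abs_le (z ⬝ᵥ S.mulVec z)
      nlinarith
    have h1 : c ≤ u ⬝ᵥ S.mulVec u := le_trans h (csInf_le hbdd ⟨u, hun, rfl⟩)
    have h2 : x ⬝ᵥ S.mulVec x = vecNorm x ^ 2 * (u ⬝ᵥ S.mulVec u) := by
      rw [hu, Matrix.mulVec_smul, smul_dotProduct, dotProduct_smul]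
      simp only [smul_eq_mul]
      rw [← mul_assoc, ← mul_assoc, sq, mul_assoc (vecNorm x) (vecNorm x),
        mul_inv_cancel₀ (ne_of_gt hx0), mul_one, mul_inv_cancel₀ (ne_of_gt hx0), one_mul]
    rw [h2]
    nlinarith [sq_nonneg (vecNorm x)]

lemma rayleigh_isUnit_det {Q : Matrix n n ℝ} {m' : ℝ} (hm : 0 < m')
    (h : ∀ x, m' * vecNorm x ^ 2 ≤ x ⬝ᵥ Q.mulVec x) : IsUnit Q.det := by
  rw [isUnit_iff_ne_zero]
  intro hdet
  obtain ⟨v, hv0, hv⟩ := Matrix.exists_mulVec_eq_zero_iff.mpr hdet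
  have := h v
  rw [hv, dotProduct_zero] at this
  have hvn : vecNorm v = 0 := by
    by_contra hne
    have hp : 0 < vecNorm v := lt_of_le_of_ne (vecNorm_nonneg v) (Ne.symm hne)
    have : 0 < m' * vecNorm v ^ 2 := by positivity
    linarith
  exact hv0 (vecNorm_eq_zero hvn)

lemma rayleigh_inv_bound {Q : Matrix n n ℝ} {m' : ℝ} (hm : 0 < m')
    (h : ∀ x, m' * vecNorm x ^ 2 ≤ x ⬝ᵥ Q.mulVec x) (y : n → ℝ) :
    vecNorm (Q⁻¹.mulVec y) ≤ m'⁻¹ * vecNorm y := by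
  have hdet := rayleigh_isUnit_det hm h
  set z := Q⁻¹.mulVec y with hz
  have hQz : Q.mulVec z = y := by
    rw [hz, Matrix.mulVec_mulVec, Matrix.mul_nonsing_inv _ hdet, Matrix.one_mulVec]
  have h1 : m' * vecNorm z ^ 2 ≤ z ⬝ᵥ Q.mulVec z := h z
  have h2 : z ⬝ᵥ Q.mulVec z ≤ vecNorm z * vecNorm y := by
    rw [hQz]
    exact le_trans (le_abs_self _) (abs_dotProduct_le z y)
  by_cases hzn : vecNorm z = 0
  · rw [hzn]
    exact mul_nonneg (inv_nonneg.mpr hm.le) (vecNorm_nonneg y)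
  · have hz0 : 0 < vecNorm z := lt_of_le_of_ne (vecNorm_nonneg z) (Ne.symm hzn)
    rw [le_inv_mul_iff₀ hm] at *
    nlinarith

lemma rayleigh_inv_quad_bound {Q : Matrix n n ℝ} {m' : ℝ} (hm : 0 < m')
    (h : ∀ x, m' * vecNorm x ^ 2 ≤ x ⬝ᵥ Q.mulVec x) (y : n → ℝ) :
    y ⬝ᵥ Q⁻¹.mulVec y ≤ m'⁻¹ * vecNorm y ^ 2 := by
  have h1 := abs_dotProduct_le y (Q⁻¹.mulVec y)
  have h2 := rayleigh_inv_bound hm h y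
  have h3 := le_abs_self (y ⬝ᵥ Q⁻¹.mulVec y)
  nlinarith [vecNorm_nonneg y, vecNorm_nonneg (Q⁻¹.mulVec y)]

lemma transpose_bound {A : Matrix m n ℝ} {c : ℝ} (hc : 0 ≤ c)
    (h : ∀ x, vecNorm (A.mulVec x) ≤ c * vecNorm x) (x : m → ℝ) :
    vecNorm (Aᵀ.mulVec x) ≤ c * vecNorm x := by
  have key : (Aᵀ.mulVec x) ⬝ᵥ (Aᵀ.mulVec x) = x ⬝ᵥ A.mulVec (Aᵀ.mulVec x) := by
    nth_rewrite 1 [Matrix.mulVec_transpose]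
    rw [← Matrix.dotProduct_mulVec]
  set g := Aᵀ.mulVec x with hg
  have h1 : g ⬝ᵥ g ≤ vecNorm x * vecNorm (A.mulVec g) := by
    rw [key]
    exact le_trans (le_abs_self _) (abs_dotProduct_le _ _)
  have h2 := h g
  have h3 := dotProduct_self_eq g
  by_cases hgn : vecNorm g = 0
  · rw [hgn]
    exact mul_nonneg hc (vecNorm_nonneg x)
  · have hg0 : 0 < vecNorm g := lt_of_le_of_ne (vecNorm_nonneg g) (Ne.symm hgn)
    nlinarith [vecNorm_nonneg x]

end op

end Helpers

section Aux
open Matrix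
variable {N : ℕ} {M : ℕ → ℕ}

lemma Dr_bound (A B : ∀ k : ℕ, Matrix (Fin (M k)) (Fin N) ℝ) (lam : ℕ → ℝ)
    {κ δ : ℝ}
    (hD : ∀ k, matSpectralNorm (Dmat A B lam k - κ • (1 : Matrix (Fin N) (Fin N) ℝ)) ≤ κ * δ)
    (k : ℕ) (x : Fin N → ℝ) :
    κ * (1 - δ) * vecNorm x ^ 2 ≤ x ⬝ᵥ (Dmat A B lam k).mulVec x := by
  have h1 : x ⬝ᵥ (Dmat A B lam k).mulVec x
      = x ⬝ᵥ ((Dmat A B lam k - κ • 1).mulVec x) + κ * (x ⬝ᵥ x) := by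
    rw [Matrix.sub_mulVec, dotProduct_sub, Matrix.smul_mulVec,
      Matrix.one_mulVec, dotProduct_smul, smul_eq_mul]
    ring
  have h2 : |x ⬝ᵥ ((Dmat A B lam k - κ • 1).mulVec x)| ≤ κ * δ * vecNorm x ^ 2 := by
    have ha := abs_dotProduct_le x ((Dmat A B lam k - κ • 1).mulVec x)
    have hb := spectral_bound (hD k) x
    nlinarith [vecNorm_nonneg x, vecNorm_nonneg ((Dmat A B lam k - κ • 1).mulVec x)]
  have h4 := neg_abs_le (x ⬝ᵥ ((Dmat A B lam k - κ • 1).mulVec x))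
  rw [h1, dotProduct_self_eq]
  nlinarith

lemma Qr_bound (A B : ∀ k : ℕ, Matrix (Fin (M k)) (Fin N) ℝ) (lam : ℕ → ℝ)
    {κ δ θ ε : ℝ} (hκ0 : 0 < κ) (hδε : δ ≤ ε) (h1εpos : 0 < 1 - ε) (hθ0 : 0 ≤ θ)
    (key : θ ^ 2 = (ε - δ) * (1 - ε))
    (hD : ∀ k, matSpectralNorm (Dmat A B lam k - κ • (1 : Matrix (Fin N) (Fin N) ℝ)) ≤ κ * δ)
    (hE : ∀ k, matSpectralNorm (Emat A B k) ≤ κ * θ) :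
    ∀ (k : ℕ) (x : Fin N → ℝ),
      κ * (1 - ε) * vecNorm x ^ 2 ≤ x ⬝ᵥ (Qmat A B lam k).mulVec x := by
  have hDr := Dr_bound A B lam hD
  have hEt : ∀ k x, vecNorm ((Emat A B k)ᵀ.mulVec x) ≤ κ * θ * vecNorm x :=
    fun k => transpose_bound (by positivity) (fun x => spectral_bound (hE k) x)
  have hm : 0 < κ * (1 - ε) := by positivity
  intro k
  induction k with
  | zero =>
    intro x
    have h0 := hDr 0 x
    simp only [Qmat]
    have hx2 : 0 ≤ κ * (ε - δ) * vecNorm x ^ 2 :=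
      mul_nonneg (mul_nonneg hκ0.le (by linarith)) (sq_nonneg _)
    nlinarith [hx2]
  | succ k ih =>
    intro x
    simp only [Qmat]
    rw [Matrix.sub_mulVec, dotProduct_sub]
    have hterm : x ⬝ᵥ (Emat A B k * ((Qmat A B lam k)⁻¹ * (Emat A B k)ᵀ)).mulVec x
        = ((Emat A B k)ᵀ.mulVec x) ⬝ᵥ (Qmat A B lam k)⁻¹.mulVec ((Emat A B k)ᵀ.mulVec x) := by
      rw [← Matrix.mulVec_mulVec, ← Matrix.mulVec_mulVec, Matrix.dotProduct_mulVec,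
        ← Matrix.mulVec_transpose]
    rw [hterm]
    have hg := hEt k x
    have hquad := rayleigh_inv_quad_bound hm ih ((Emat A B k)ᵀ.mulVec x)
    have hD1 := hDr (k + 1) x
    have hgsq : vecNorm ((Emat A B k)ᵀ.mulVec x) ^ 2 ≤ (κ * θ) ^ 2 * vecNorm x ^ 2 := by
      nlinarith [vecNorm_nonneg ((Emat A B k)ᵀ.mulVec x), vecNorm_nonneg x]
    have halg : (κ * (1 - ε))⁻¹ * ((κ * θ) ^ 2) = κ * (ε - δ) := by
      rw [inv_mul_eq_iff_eq_mul₀ (ne_of_gt hm)]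
      linear_combination κ ^ 2 * key
    have hchain : ((Emat A B k)ᵀ.mulVec x) ⬝ᵥ (Qmat A B lam k)⁻¹.mulVec ((Emat A B k)ᵀ.mulVec x)
        ≤ κ * (ε - δ) * vecNorm x ^ 2 := by
      have hinv : (0:ℝ) ≤ (κ * (1 - ε))⁻¹ := by positivity
      calc ((Emat A B k)ᵀ.mulVec x) ⬝ᵥ (Qmat A B lam k)⁻¹.mulVec ((Emat A B k)ᵀ.mulVec x)
          ≤ (κ * (1 - ε))⁻¹ * vecNorm ((Emat A B k)ᵀ.mulVec x) ^ 2 := hquad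
        _ ≤ (κ * (1 - ε))⁻¹ * ((κ * θ) ^ 2 * vecNorm x ^ 2) :=
            mul_le_mul_of_nonneg_left hgsq hinv
        _ = κ * (ε - δ) * vecNorm x ^ 2 := by rw [← mul_assoc, halg]
    have hid : κ * (1 - δ) * vecNorm x ^ 2 - κ * (ε - δ) * vecNorm x ^ 2
        = κ * (1 - ε) * vecNorm x ^ 2 := by ring
    linarith

lemma U_bound (A B : ∀ k : ℕ, Matrix (Fin (M k)) (Fin N) ℝ) (lam : ℕ → ℝ)
    {κ δ θ ε : ℝ} (hκ0 : 0 < κ) (hδε : δ ≤ ε) (h1εpos : 0 < 1 - ε) (hθ0 : 0 ≤ θ)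
    (key : θ ^ 2 = (ε - δ) * (1 - ε))
    (hD : ∀ k, matSpectralNorm (Dmat A B lam k - κ • (1 : Matrix (Fin N) (Fin N) ℝ)) ≤ κ * δ)
    (hE : ∀ k, matSpectralNorm (Emat A B k) ≤ κ * θ)
    (k : ℕ) (x : Fin N → ℝ) :
    vecNorm ((Umat A B lam k).mulVec x) ≤ θ / (1 - ε) * vecNorm x := by
  have hm : 0 < κ * (1 - ε) := by positivity
  have hEt : ∀ k x, vecNorm ((Emat A B k)ᵀ.mulVec x) ≤ κ * θ * vecNorm x :=
    fun k => transpose_bound (by positivity) (fun x => spectral_bound (hE k) x)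
  have h1 : (Umat A B lam k).mulVec x
      = (Qmat A B lam k)⁻¹.mulVec ((Emat A B k)ᵀ.mulVec x) := by
    simp only [Umat]
    rw [Matrix.mulVec_mulVec]
  rw [h1]
  have h2 := rayleigh_inv_bound hm (Qr_bound A B lam hκ0 hδε h1εpos hθ0 key hD hE k)
    ((Emat A B k)ᵀ.mulVec x)
  have h3 := hEt k x
  have hinv : (0:ℝ) ≤ (κ * (1 - ε))⁻¹ := by positivity
  have h4 : (κ * (1 - ε))⁻¹ * (κ * θ * vecNorm x) = θ / (1 - ε) * vecNorm x := by
    field_simp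
  calc vecNorm ((Qmat A B lam k)⁻¹.mulVec ((Emat A B k)ᵀ.mulVec x))
      ≤ (κ * (1 - ε))⁻¹ * vecNorm ((Emat A B k)ᵀ.mulVec x) := h2
    _ ≤ (κ * (1 - ε))⁻¹ * (κ * θ * vecNorm x) := mul_le_mul_of_nonneg_left h3 hinv
    _ = θ / (1 - ε) * vecNorm x := h4

lemma alphaEst_rec (A B : ∀ k : ℕ, Matrix (Fin (M k)) (Fin N) ℝ) (lam : ℕ → ℝ)
    (y : ∀ k : ℕ, Fin (M k) → ℝ) (K j : ℕ) (hj : j < K) :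
    alphaEst A B lam y j K
      = vvec A B lam y j - (Umat A B lam j).mulVec (alphaEst A B lam y (j + 1) K) := by
  have h1 : K - j = (K - (j + 1)) + 1 := by omega
  have h2 : K - ((K - (j + 1)) + 1) = j := by omega
  simp only [alphaEst]
  rw [h1]
  simp only [alphaAux]
  rw [h2]

lemma diff_step (A B : ∀ k : ℕ, Matrix (Fin (M k)) (Fin N) ℝ) (lam : ℕ → ℝ)
    (y : ∀ k : ℕ, Fin (M k) → ℝ)
    {κ δ θ ε : ℝ} (hκ0 : 0 < κ) (hδε : δ ≤ ε) (h1εpos : 0 < 1 - ε) (hθ0 : 0 ≤ θ)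
    (key : θ ^ 2 = (ε - δ) * (1 - ε))
    (hD : ∀ k, matSpectralNorm (Dmat A B lam k - κ • (1 : Matrix (Fin N) (Fin N) ℝ)) ≤ κ * δ)
    (hE : ∀ k, matSpectralNorm (Emat A B k) ≤ κ * θ)
    (K j : ℕ) (hj : j < K) :
    vecNorm (alphaEst A B lam y j (K + 1) - alphaEst A B lam y j K) ≤
      θ / (1 - ε) *
        vecNorm (alphaEst A B lam y (j + 1) (K + 1) - alphaEst A B lam y (j + 1) K) := by
  rw [alphaEst_rec A B lam y (K + 1) j (by omega), alphaEst_rec A B lam y K j hj]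
  have e3 : (vvec A B lam y j - (Umat A B lam j).mulVec (alphaEst A B lam y (j + 1) (K + 1)))
        - (vvec A B lam y j - (Umat A B lam j).mulVec (alphaEst A B lam y (j + 1) K))
      = (Umat A B lam j).mulVec
          (alphaEst A B lam y (j + 1) K - alphaEst A B lam y (j + 1) (K + 1)) := by
    rw [Matrix.mulVec_sub]
    abel
  rw [e3]
  calc vecNorm ((Umat A B lam j).mulVec
          (alphaEst A B lam y (j + 1) K - alphaEst A B lam y (j + 1) (K + 1)))
      ≤ θ / (1 - ε) * vecNorm (alphaEst A B lam y (j + 1) K - alphaEst A B lam y (j + 1) (K + 1)) :=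
        U_bound A B lam hκ0 hδε h1εpos hθ0 key hD hE j _
    _ = θ / (1 - ε) *
        vecNorm (alphaEst A B lam y (j + 1) (K + 1) - alphaEst A B lam y (j + 1) K) := by
        rw [← neg_sub (alphaEst A B lam y (j + 1) (K + 1)) (alphaEst A B lam y (j + 1) K),
          vecNorm_neg]
end Aux

/-- geometric back-propagation of the streaming least-squares updates:
under the stability hypotheses, `‖α_{k−ℓ|K+1} − α_{k−ℓ|K}‖₂ ≤ (θ/(1−ε))^ℓ ·
‖α_{k|K+1} − α_{k|K}‖₂` for all `K ≥ k ≥ ℓ ≥ 0`. -/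
theorem streaming_update_geometric_decay
    (N : ℕ) (hN : 1 ≤ N) (M : ℕ → ℕ)
    (A B : ∀ k : ℕ, Matrix (Fin (M k)) (Fin N) ℝ)
    (y : ∀ k : ℕ, Fin (M k) → ℝ) (lam : ℕ → ℝ) (hlam : ∀ k, 0 ≤ lam k)
    (κ δ θ lam0 : ℝ) (hκ : 1 ≤ κ) (hδ0 : 0 ≤ δ) (hδ1 : δ < 1)
    (hθ0 : 0 ≤ θ) (hθ : θ < (1 - δ) / 2) (hlam0 : 0 < lam0)
    (hD : ∀ k, matSpectralNorm (Dmat A B lam k - κ • (1 : Matrix (Fin N) (Fin N) ℝ)) ≤ κ * δ)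
    (hE : ∀ k, matSpectralNorm (Emat A B k) ≤ κ * θ)
    (hQ' : ∀ k, κ * lam0 ≤ eigMin (Qmat' A B lam k))
    (ε : ℝ) (hε : ε = (1 + δ) / 2 - Real.sqrt ((1 - δ) ^ 2 / 4 - θ ^ 2)) :
    ∀ K k l : ℕ, l ≤ k → k ≤ K →
      vecNorm (alphaEst A B lam y (k - l) (K + 1) - alphaEst A B lam y (k - l) K) ≤
        (θ / (1 - ε)) ^ l *
          vecNorm (alphaEst A B lam y k (K + 1) - alphaEst A B lam y k K) := by
  have hinner : 0 ≤ (1 - δ) ^ 2 / 4 - θ ^ 2 := by nlinarith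
  have hs2 : Real.sqrt ((1 - δ) ^ 2 / 4 - θ ^ 2) ^ 2 = (1 - δ) ^ 2 / 4 - θ ^ 2 :=
    Real.sq_sqrt hinner
  have hs0 : 0 ≤ Real.sqrt ((1 - δ) ^ 2 / 4 - θ ^ 2) := Real.sqrt_nonneg _
  have hsle : Real.sqrt ((1 - δ) ^ 2 / 4 - θ ^ 2) ≤ (1 - δ) / 2 := by
    calc Real.sqrt ((1 - δ) ^ 2 / 4 - θ ^ 2)
        ≤ Real.sqrt (((1 - δ) / 2) ^ 2) := Real.sqrt_le_sqrt (by nlinarith)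
      _ = (1 - δ) / 2 := Real.sqrt_sq (by linarith)
  have hδε : δ ≤ ε := by rw [hε]; linarith
  have h1εpos : 0 < 1 - ε := by rw [hε]; linarith
  have hκ0 : 0 < κ := by linarith
  have key : θ ^ 2 = (ε - δ) * (1 - ε) := by rw [hε]; nlinarith [hs2]
  have hr0 : 0 ≤ θ / (1 - ε) := div_nonneg hθ0 h1εpos.le
  have hstep := diff_step A B lam y hκ0 hδε h1εpos hθ0 key hD hE
  intro K k l
  induction l with
  | zero =>
    intro _ _
    simp
  | succ l ih =>
    intro hl hk
    have ihh := ih (by omega) hk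
    have hj : k - (l + 1) < K := by omega
    have hstep' := hstep K (k - (l + 1)) hj
    have hsucc : k - (l + 1) + 1 = k - l := by omega
    rw [hsucc] at hstep'
    calc vecNorm (alphaEst A B lam y (k - (l + 1)) (K + 1) - alphaEst A B lam y (k - (l + 1)) K)
        ≤ θ / (1 - ε) *
            vecNorm (alphaEst A B lam y (k - l) (K + 1) - alphaEst A B lam y (k - l) K) :=
          hstep'
      _ ≤ θ / (1 - ε) *
            ((θ / (1 - ε)) ^ l *
              vecNorm (alphaEst A B lam y k (K + 1) - alphaEst A B lam y k K)) :=
          mul_le_mul_of_nonneg_left ihh hr0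
      _ = (θ / (1 - ε)) ^ (l + 1) *
            vecNorm (alphaEst A B lam y k (K + 1) - alphaEst A B lam y k K) := by
          ring
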